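/- Under assumptions (R1)-(R4) and the Bregman scaling condition with exponent θ = 1, the symmetric Bregman distance satisfies D(u^δ_α, u†) ≤ inf over (ζ1,ζ2) ∈ Σ of [ ( e_{α,ζ1}(μ†) + (δ/α) e_{δ,ζ2}(η) ) / ( 1 − (ζ1 + (δ/α)ζ2) C_1(u^δ_α, u†) ) ], where Σ = { (ζ1,ζ2) ∈ (0,∞)² : (ζ1 + (δ/α)ζ2) C_1(u^δ_α, u†) < 1 }. -/

import Mathlib

open scoped RealInnerProductSpace

/-- The variational functional `J^δ_α(u) = ½‖Ku‖²_Y − ⟨Ku, f^δ⟩_{Z×Z*} + α R(u)`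
with `f^δ = Ku† + δn`, the pairing of `Ku` with `Ku† ∈ Z ⊂ Y ⊂ Z*` being the
`Y`-inner product (`Z` embedded in `Y` via `j`), and `n ∈ Z*`. -/
noncomputable def Jfun {X Y Z : Type*} [NormedAddCommGroup X] [NormedSpace ℝ X]
    [NormedAddCommGroup Y] [InnerProductSpace ℝ Y]
    [NormedAddCommGroup Z] [NormedSpace ℝ Z]
    (j : Z →L[ℝ] Y) (K : X →L[ℝ] Z) (R : X → EReal)
    (udag : X) (n : Z →L[ℝ] ℝ) (δ α : ℝ) (u : X) : EReal :=
  (((1 : ℝ) / 2 * ‖j (K u)‖ ^ 2 - (⟪j (K u), j (K udag)⟫ + δ * n (K u)) : ℝ) : EReal)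
    + (α : EReal) * R u

/-- The convex conjugate `R*(q) = sup_u (⟨q,u⟩ − R(u))`, valued in `EReal`. -/
noncomputable def conjR {X : Type*} [NormedAddCommGroup X] [NormedSpace ℝ X]
    (R : X → EReal) (q : X →L[ℝ] ℝ) : EReal :=
  ⨆ u : X, ((q u : EReal) - R u)

/-- `K* w ∈ X*` for `w ∈ Y`: the functional `u ↦ ⟪w, (j ∘ K) u⟫_Y`. -/
noncomputable def KstarY {X Y Z : Type*} [NormedAddCommGroup X] [NormedSpace ℝ X]
    [NormedAddCommGroup Y] [InnerProductSpace ℝ Y]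
    [NormedAddCommGroup Z] [NormedSpace ℝ Z]
    (j : Z →L[ℝ] Y) (K : X →L[ℝ] Z) (w : Y) : X →L[ℝ] ℝ :=
  (innerSL ℝ w).comp (j.comp K)

/-- The approximate-source-condition functional
`e_{α,ζ}(ϑ) = inf_{w ∈ Y} [ζ R*((K*w − ϑ)/ζ) + (α/2)‖w‖²_Y]`. -/
noncomputable def efun {X Y Z : Type*} [NormedAddCommGroup X] [NormedSpace ℝ X]
    [NormedAddCommGroup Y] [InnerProductSpace ℝ Y]
    [NormedAddCommGroup Z] [NormedSpace ℝ Z]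
    (j : Z →L[ℝ] Y) (K : X →L[ℝ] Z) (R : X → EReal)
    (α ζ : ℝ) (ϑ : X →L[ℝ] ℝ) : EReal :=
  ⨅ w : Y, ((ζ : EReal) * conjR R (ζ⁻¹ • (KstarY j K w - ϑ))
    + ((α / 2 * ‖w‖ ^ 2 : ℝ) : EReal))


private lemma ereal_mul_coe_le {ζ r : ℝ} (hζ : 0 < ζ) {x : EReal} (h : (r : EReal) ≤ x) :
    ((ζ * r : ℝ) : EReal) ≤ (ζ : EReal) * x := by
  induction x with
  | bot => simp at h
  | coe c =>
    rw [← EReal.coe_mul, EReal.coe_le_coe_iff]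
    exact mul_le_mul_of_nonneg_left (by exact_mod_cast h) hζ.le
  | top => rw [EReal.mul_top_of_pos (by exact_mod_cast hζ)]; exact le_top

private lemma ereal_mul_le_coe {ζ b : ℝ} (hζ : 0 < ζ) {x : EReal} (h : x ≤ (b : EReal)) :
    (ζ : EReal) * x ≤ ((ζ * b : ℝ) : EReal) := by
  induction x with
  | bot => rw [EReal.mul_bot_of_pos (by exact_mod_cast hζ)]; exact bot_le
  | coe c =>
    rw [← EReal.coe_mul, EReal.coe_le_coe_iff]
    exact mul_le_mul_of_nonneg_left (by exact_mod_cast h) hζ.le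
  | top => simp at h

private lemma quad_bound {β W S I : ℝ} (hβ : 0 < β) (hI : -(W * S) ≤ I) :
    -(S ^ 2 / (2 * β)) ≤ β / 2 * W ^ 2 + I := by
  have h0 : 0 ≤ (β * W - S) ^ 2 := sq_nonneg _
  have h1 : 0 ≤ 1 / (2 * β) * (β * W - S) ^ 2 := mul_nonneg (by positivity) h0
  have hid : 1 / (2 * β) * (β * W - S) ^ 2 = β / 2 * W ^ 2 - W * S + S ^ 2 / (2 * β) := by
    field_simp; ring
  rw [hid] at h1
  linarith

set_option maxHeartbeats 1000000 in
/-- Theorem 2.9 (case `θ = 1`): under (R1)-(R4) and the Bregman scaling condition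
`R(u−v) ≤ C_1(u,v) D(u,v)`, the symmetric Bregman distance satisfies
`D(u^δ_α,u†) ≤ inf_{(ζ1,ζ2) ∈ Σ} (e_{α,ζ1}(μ†) + (δ/α) e_{δ,ζ2}(η)) / (1 − (ζ1 + (δ/α)ζ2) C_1(u^δ_α,u†))`,
where `Σ = {(ζ1,ζ2) ∈ (0,∞)² : (ζ1 + (δ/α)ζ2) C_1(u^δ_α,u†) < 1}`. -/
theorem stmt6
    {X Y Z : Type*}
    [NormedAddCommGroup X] [NormedSpace ℝ X] [CompleteSpace X]
    [TopologicalSpace.SeparableSpace X]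
    [NormedAddCommGroup Y] [InnerProductSpace ℝ Y] [CompleteSpace Y]
    [NormedAddCommGroup Z] [NormedSpace ℝ Z]
    (j : Z →L[ℝ] Y) (hjinj : Function.Injective j) (hjdense : DenseRange j)
    (K : X →L[ℝ] Z)
    (R : X → EReal)
    -- convexity of `R`
    (hRconv : ∀ u v : X, ∀ t : ℝ, 0 ≤ t → t ≤ 1 →
      R (t • u + (1 - t) • v) ≤ (t : EReal) * R u + ((1 - t : ℝ) : EReal) * R v)
    -- (R1)+(R2): there is a topology `τ` on `X` in which `K` is continuous, `R` is
    -- sequentially lower semicontinuous, and sublevel sets of `R` are sequentially compact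
    (hR12 : ∃ τ : TopologicalSpace X,
      (@Continuous X Z τ _ fun u => K u) ∧
      (∀ (u : ℕ → X) (x : X),
        Filter.Tendsto u Filter.atTop (@nhds X τ x) →
        R x ≤ Filter.liminf (fun k => R (u k)) Filter.atTop) ∧
      (∀ ρ : ℝ, @IsSeqCompact X τ {u : X | R u ≤ (ρ : EReal)}))
    -- (R3): the convex conjugate `R*` is finite on a ball around `0` in `X*`
    (hR3 : ∃ ε : ℝ, 0 < ε ∧ ∀ q : X →L[ℝ] ℝ, ‖q‖ ≤ ε → conjR R q < ⊤)
    -- (R4): symmetry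
    (hR4 : ∀ u : X, R (-u) = R u)
    (udag : X) (n : Z →L[ℝ] ℝ) (δ α : ℝ) (hδ : 0 < δ) (hα : 0 < α)
    -- `μ† ∈ ∂R(u†)`
    (μdag : X →L[ℝ] ℝ)
    (hμdag : ∀ v : X, R udag + ((μdag (v - udag) : ℝ) : EReal) ≤ R v)
    -- `u^δ_α` is a minimizer of `J^δ_α` and `μ^δ_α ∈ ∂R(u^δ_α)` satisfies the
    -- optimality condition `K*(K u^δ_α − f^δ) + α μ^δ_α = 0`
    (uδα : X) (μδα : X →L[ℝ] ℝ)
    (hmin : ∀ u : X, Jfun j K R udag n δ α uδα ≤ Jfun j K R udag n δ α u)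
    (hsub : ∀ v : X, R uδα + ((μδα (v - uδα) : ℝ) : EReal) ≤ R v)
    (hopt : ∀ u : X,
      ⟪j (K u), j (K uδα) - j (K udag)⟫ - δ * n (K u) + α * μδα u = 0)
    -- Bregman scaling condition with exponent `θ = 1`
    (C1 : X → X → ℝ) (hC1 : ∀ u v : X, 0 ≤ C1 u v)
    (hscal : ∀ (u v : X) (μu μv : X →L[ℝ] ℝ),
      (∀ x : X, R u + ((μu (x - u) : ℝ) : EReal) ≤ R x) →
      (∀ x : X, R v + ((μv (x - v) : ℝ) : EReal) ≤ R x) →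
      R (u - v) ≤ ((C1 u v * ((μu - μv) (u - v)) : ℝ) : EReal)) :
    ((((μδα - μdag) (uδα - udag)) : ℝ) : EReal)
      ≤ ⨅ (ζ1 : ℝ) (_ : 0 < ζ1) (ζ2 : ℝ) (_ : 0 < ζ2)
          (_ : (ζ1 + δ / α * ζ2) * C1 uδα udag < 1),
          (((1 - (ζ1 + δ / α * ζ2) * C1 uδα udag)⁻¹ : ℝ) : EReal)
            * (efun j K R α ζ1 μdag
              + ((δ / α : ℝ) : EReal) * efun j K R δ ζ2 (n.comp K)) := by
  classical
  set e0 : X := uδα - udag with he0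
  set C : ℝ := C1 uδα udag with hCdef
  set L : ℝ := (μδα - μdag) e0 with hLdef
  refine le_iInf fun ζ1 => le_iInf fun hζ1 => le_iInf fun ζ2 => le_iInf fun hζ2 =>
    le_iInf fun hlt => ?_
  have hd : 0 < δ / α := div_pos hδ hα
  have hC0 : 0 ≤ C := hC1 uδα udag
  set c : ℝ := ζ1 + δ / α * ζ2 with hcdef
  have hc0 : 0 < c := by positivity
  set coef : ℝ := 1 - c * C with hcoefdef
  have hcoef : 0 < coef := by rw [hcoefdef]; linarith
  set s : Y := j (K e0) with hsdef
  set Mc : ℝ := μdag e0 with hMdef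
  set N : ℝ := n (K e0) with hNdef
  have hLval : L = μδα e0 - Mc := by
    rw [hLdef, hMdef, ContinuousLinearMap.sub_apply]
  have hRe0 : R e0 ≤ ((C * L : ℝ) : EReal) := by
    have h := hscal uδα udag μδα μdag hsub hμdag
    rw [← he0, ← hCdef, ← hLdef] at h
    exact h
  have hopt0 : ‖s‖ ^ 2 - δ * N + α * μδα e0 = 0 := by
    have h := hopt e0
    have hmap : j (K uδα) - j (K udag) = s := by
      rw [hsdef, he0, map_sub, map_sub]
    rw [hmap, ← hsdef, ← hNdef, real_inner_self_eq_norm_sq] at h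
    exact h
  have hfen : ∀ (q : X →L[ℝ] ℝ) (u₀ : X) (r0 : ℝ), R u₀ ≤ (r0 : EReal) →
      ((q u₀ - r0 : ℝ) : EReal) ≤ conjR R q := by
    intro q u₀ r0 h
    calc ((q u₀ - r0 : ℝ) : EReal) = (q u₀ : EReal) - (r0 : EReal) := by
          rw [EReal.coe_sub]
      _ ≤ (q u₀ : EReal) - R u₀ := EReal.sub_le_sub le_rfl h
      _ ≤ conjR R q := by
          simp only [conjR]
          exact le_iSup (fun u => ((q u : EReal) - R u)) u₀
  have hq1 : ∀ (w : Y) (u : X),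
      (ζ1⁻¹ • (KstarY j K w - μdag)) u = ζ1⁻¹ * (⟪w, j (K u)⟫ - μdag u) := by
    intro w u
    simp [KstarY, ContinuousLinearMap.smul_apply, ContinuousLinearMap.sub_apply,
      ContinuousLinearMap.comp_apply, innerSL_apply_apply, smul_eq_mul]
  have hq2 : ∀ (w : Y) (u : X),
      (ζ2⁻¹ • (KstarY j K w - n.comp K)) u = ζ2⁻¹ * (⟪w, j (K u)⟫ - n (K u)) := by
    intro w u
    simp [KstarY, ContinuousLinearMap.smul_apply, ContinuousLinearMap.sub_apply,
      ContinuousLinearMap.comp_apply, innerSL_apply_apply, smul_eq_mul]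
  set m1 : ℝ := -(‖s‖ ^ 2 / (2 * α)) - Mc - ζ1 * (C * L) with hm1def
  set m2 : ℝ := -(‖s‖ ^ 2 / (2 * δ)) - N - ζ2 * (C * L) with hm2def
  have hflb : ∀ w : Y, (m1 : EReal) ≤
      (ζ1 : EReal) * conjR R (ζ1⁻¹ • (KstarY j K w - μdag))
        + ((α / 2 * ‖w‖ ^ 2 : ℝ) : EReal) := by
    intro w
    have h1 := hfen (ζ1⁻¹ • (KstarY j K w - μdag)) e0 (C * L) hRe0
    rw [hq1 w e0, ← hsdef, ← hMdef] at h1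
    have h2 : ((ζ1 * (ζ1⁻¹ * (⟪w, s⟫ - Mc) - C * L) + α / 2 * ‖w‖ ^ 2 : ℝ) : EReal) ≤
        (ζ1 : EReal) * conjR R (ζ1⁻¹ • (KstarY j K w - μdag))
          + ((α / 2 * ‖w‖ ^ 2 : ℝ) : EReal) := by
      rw [EReal.coe_add]
      exact add_le_add (ereal_mul_coe_le hζ1 h1) le_rfl
    refine le_trans ?_ h2
    rw [EReal.coe_le_coe_iff]
    have hz : ζ1 * (ζ1⁻¹ * (⟪w, s⟫ - Mc) - C * L) = ⟪w, s⟫ - Mc - ζ1 * (C * L) := by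
      field_simp
    rw [hz, hm1def]
    have hcs : -(‖w‖ * ‖s‖) ≤ ⟪w, s⟫ := by
      have h3 := abs_real_inner_le_norm w s
      have h4 := neg_abs_le ⟪w, s⟫
      linarith
    have h5 := quad_bound hα hcs
    linarith
  have hglb : ∀ w : Y, (m2 : EReal) ≤
      (ζ2 : EReal) * conjR R (ζ2⁻¹ • (KstarY j K w - n.comp K))
        + ((δ / 2 * ‖w‖ ^ 2 : ℝ) : EReal) := by
    intro w
    have h1 := hfen (ζ2⁻¹ • (KstarY j K w - n.comp K)) e0 (C * L) hRe0
    rw [hq2 w e0, ← hsdef, ← hNdef] at h1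
    have h2 : ((ζ2 * (ζ2⁻¹ * (⟪w, s⟫ - N) - C * L) + δ / 2 * ‖w‖ ^ 2 : ℝ) : EReal) ≤
        (ζ2 : EReal) * conjR R (ζ2⁻¹ • (KstarY j K w - n.comp K))
          + ((δ / 2 * ‖w‖ ^ 2 : ℝ) : EReal) := by
      rw [EReal.coe_add]
      exact add_le_add (ereal_mul_coe_le hζ2 h1) le_rfl
    refine le_trans ?_ h2
    rw [EReal.coe_le_coe_iff]
    have hz : ζ2 * (ζ2⁻¹ * (⟪w, s⟫ - N) - C * L) = ⟪w, s⟫ - N - ζ2 * (C * L) := by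
      field_simp
    rw [hz, hm2def]
    have hcs : -(‖w‖ * ‖s‖) ≤ ⟪w, s⟫ := by
      have h3 := abs_real_inner_le_norm w s
      have h4 := neg_abs_le ⟪w, s⟫
      linarith
    have h5 := quad_bound hδ hcs
    linarith
  have hE1lb : (m1 : EReal) ≤ efun j K R α ζ1 μdag := by
    simp only [efun]; exact le_iInf hflb
  have hE2lb : (m2 : EReal) ≤ efun j K R δ ζ2 (n.comp K) := by
    simp only [efun]; exact le_iInf hglb
  set t : ℝ := coef * L with htdef
  have hB : ∀ w1 w2 : Y, (t : EReal) ≤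
      ((ζ1 : EReal) * conjR R (ζ1⁻¹ • (KstarY j K w1 - μdag))
        + ((α / 2 * ‖w1‖ ^ 2 : ℝ) : EReal))
      + ((δ / α : ℝ) : EReal) *
        ((ζ2 : EReal) * conjR R (ζ2⁻¹ • (KstarY j K w2 - n.comp K))
          + ((δ / 2 * ‖w2‖ ^ 2 : ℝ) : EReal)) := by
    intro w1 w2
    by_cases hbot : R e0 = ⊥
    · have htop : conjR R (ζ1⁻¹ • (KstarY j K w1 - μdag)) = ⊤ := by
        apply top_unique
        refine le_trans ?_
          (le_iSup (fun u => (((ζ1⁻¹ • (KstarY j K w1 - μdag)) u : ℝ) : EReal) - R u) e0)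
        rw [hbot, EReal.coe_sub_bot]
      have h1 : (ζ1 : EReal) * conjR R (ζ1⁻¹ • (KstarY j K w1 - μdag))
          + ((α / 2 * ‖w1‖ ^ 2 : ℝ) : EReal) = ⊤ := by
        rw [htop, EReal.mul_top_of_pos (by exact_mod_cast hζ1), EReal.top_add_coe]
      rw [h1]
      have hx : ((δ / α * m2 : ℝ) : EReal) ≤ ((δ / α : ℝ) : EReal) *
          ((ζ2 : EReal) * conjR R (ζ2⁻¹ • (KstarY j K w2 - n.comp K))
            + ((δ / 2 * ‖w2‖ ^ 2 : ℝ) : EReal)) :=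
        ereal_mul_coe_le hd (hglb w2)
      have hxb : ((δ / α : ℝ) : EReal) *
          ((ζ2 : EReal) * conjR R (ζ2⁻¹ • (KstarY j K w2 - n.comp K))
            + ((δ / 2 * ‖w2‖ ^ 2 : ℝ) : EReal)) ≠ ⊥ := by
        intro hb
        rw [hb] at hx
        exact (EReal.coe_ne_bot _) (le_bot_iff.1 hx)
      rw [EReal.top_add_of_ne_bot hxb]
      exact le_top
    · have hntop : R e0 ≠ ⊤ := ne_top_of_le_ne_top (EReal.coe_ne_top _) hRe0
      set ρ : ℝ := (R e0).toReal with hρdef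
      have hρeq : R e0 = (ρ : EReal) := (EReal.coe_toReal hntop hbot).symm
      have hρle : ρ ≤ C * L := by
        rw [hρeq] at hRe0; exact_mod_cast hRe0
      have h1 := hfen (ζ1⁻¹ • (KstarY j K w1 - μdag)) e0 ρ hρeq.le
      rw [hq1 w1 e0, ← hsdef, ← hMdef] at h1
      have h2 := hfen (ζ2⁻¹ • (KstarY j K w2 - n.comp K)) (-e0) ρ
        (by rw [hR4 e0]; exact hρeq.le)
      rw [map_neg, hq2 w2 e0, ← hsdef, ← hNdef] at h2
      have hf1 : ((ζ1 * (ζ1⁻¹ * (⟪w1, s⟫ - Mc) - ρ) + α / 2 * ‖w1‖ ^ 2 : ℝ) : EReal) ≤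
          (ζ1 : EReal) * conjR R (ζ1⁻¹ • (KstarY j K w1 - μdag))
            + ((α / 2 * ‖w1‖ ^ 2 : ℝ) : EReal) := by
        rw [EReal.coe_add]
        exact add_le_add (ereal_mul_coe_le hζ1 h1) le_rfl
      have hg2 : ((ζ2 * (-(ζ2⁻¹ * (⟪w2, s⟫ - N)) - ρ) + δ / 2 * ‖w2‖ ^ 2 : ℝ) : EReal) ≤
          (ζ2 : EReal) * conjR R (ζ2⁻¹ • (KstarY j K w2 - n.comp K))
            + ((δ / 2 * ‖w2‖ ^ 2 : ℝ) : EReal) := by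
        rw [EReal.coe_add]
        exact add_le_add (ereal_mul_coe_le hζ2 h2) le_rfl
      have hg2' := ereal_mul_coe_le hd hg2
      refine le_trans ?_ (add_le_add hf1 hg2')
      rw [← EReal.coe_add, EReal.coe_le_coe_iff]
      have e1 : ζ1 * (ζ1⁻¹ * (⟪w1, s⟫ - Mc) - ρ) = ⟪w1, s⟫ - Mc - ζ1 * ρ := by
        field_simp
      have e2 : ζ2 * (-(ζ2⁻¹ * (⟪w2, s⟫ - N)) - ρ) = N - ⟪w2, s⟫ - ζ2 * ρ := by
        field_simp; ring
      rw [e1, e2, htdef, hcoefdef, hcdef]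
      rw [← mul_le_mul_iff_of_pos_right hα]
      have hLα : α * L = δ * N - ‖s‖ ^ 2 - α * Mc := by
        rw [hLval, mul_sub]; linarith
      have hid1 : (⟪w1, s⟫ - Mc - ζ1 * ρ + α / 2 * ‖w1‖ ^ 2
            + δ / α * (N - ⟪w2, s⟫ - ζ2 * ρ + δ / 2 * ‖w2‖ ^ 2)) * α
          = (⟪w1, s⟫ - Mc - ζ1 * ρ) * α + α ^ 2 / 2 * ‖w1‖ ^ 2
            + δ * (N - ⟪w2, s⟫ - ζ2 * ρ) + δ * (δ / 2) * ‖w2‖ ^ 2 := by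
        field_simp; ring
      have hid2 : (1 - (ζ1 + δ / α * ζ2) * C) * L * α
          = α * L - ζ1 * C * (α * L) - δ * ζ2 * (C * L) := by
        field_simp; ring
      rw [hid1, hid2]
      have hcs1 : -(‖w1‖ * ‖s‖) ≤ ⟪w1, s⟫ := by
        have h3 := abs_real_inner_le_norm w1 s
        have h4 := neg_abs_le ⟪w1, s⟫
        linarith
      have hcs2 : ⟪w2, s⟫ ≤ ‖w2‖ * ‖s‖ := real_inner_le_norm w2 s
      have hA1 : -(α * ⟪w1, s⟫) ≤ α ^ 2 / 2 * ‖w1‖ ^ 2 + ‖s‖ ^ 2 / 2 := by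
        nlinarith [sq_nonneg (α * ‖w1‖ - ‖s‖),
          mul_nonneg hα.le (by linarith : (0:ℝ) ≤ ⟪w1, s⟫ + ‖w1‖ * ‖s‖)]
      have hA2 : δ * ⟪w2, s⟫ ≤ δ ^ 2 / 2 * ‖w2‖ ^ 2 + ‖s‖ ^ 2 / 2 := by
        nlinarith [sq_nonneg (δ * ‖w2‖ - ‖s‖),
          mul_nonneg hδ.le (by linarith : (0:ℝ) ≤ ‖w2‖ * ‖s‖ - ⟪w2, s⟫)]
      have hs1 : 0 ≤ ζ1 * α * (C * L - ρ) :=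
        mul_nonneg (mul_nonneg hζ1.le hα.le) (by linarith)
      have hs2 : 0 ≤ δ * ζ2 * (C * L - ρ) :=
        mul_nonneg (mul_nonneg hδ.le hζ2.le) (by linarith)
      nlinarith [hA1, hA2, hs1, hs2, hLα]
  have hFne : efun j K R α ζ1 μdag ≠ ⊥ := by
    intro h
    rw [h] at hE1lb
    exact (EReal.coe_ne_bot _) (le_bot_iff.1 hE1lb)
  have hGne : efun j K R δ ζ2 (n.comp K) ≠ ⊥ := by
    intro h
    rw [h] at hE2lb
    exact (EReal.coe_ne_bot _) (le_bot_iff.1 hE2lb)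
  have hstepC : (t : EReal) ≤ efun j K R α ζ1 μdag
      + ((δ / α : ℝ) : EReal) * efun j K R δ ζ2 (n.comp K) := by
    by_cases hGtop : efun j K R δ ζ2 (n.comp K) = ⊤
    · rw [hGtop, EReal.mul_top_of_pos (by exact_mod_cast hd), EReal.add_top_of_ne_bot hFne]
      exact le_top
    · have hGb : efun j K R δ ζ2 (n.comp K)
          = (((efun j K R δ ζ2 (n.comp K)).toReal : ℝ) : EReal) :=
        (EReal.coe_toReal hGtop hGne).symm
      set b : ℝ := (efun j K R δ ζ2 (n.comp K)).toReal with hbdef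
      by_cases hFtop : efun j K R α ζ1 μdag = ⊤
      · rw [hFtop, hGb, ← EReal.coe_mul, EReal.top_add_coe]
        exact le_top
      · have hFa : efun j K R α ζ1 μdag
            = (((efun j K R α ζ1 μdag).toReal : ℝ) : EReal) :=
          (EReal.coe_toReal hFtop hFne).symm
        set a : ℝ := (efun j K R α ζ1 μdag).toReal with hadef
        rw [hFa, hGb, ← EReal.coe_mul, ← EReal.coe_add, EReal.coe_le_coe_iff]
        by_contra hcon
        push_neg at hcon
        set gap : ℝ := t - (a + δ / α * b) with hgapdef
        have hgap : 0 < gap := by rw [hgapdef]; linarith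
        have hF' : efun j K R α ζ1 μdag < ((a + gap / 3 : ℝ) : EReal) := by
          rw [hFa]
          exact_mod_cast (by linarith : a < a + gap / 3)
        have hG' : efun j K R δ ζ2 (n.comp K) < ((b + α / δ * (gap / 3) : ℝ) : EReal) := by
          rw [hGb]
          have : 0 < α / δ * (gap / 3) := by positivity
          exact_mod_cast (by linarith : b < b + α / δ * (gap / 3))
        simp only [efun] at hF' hG'
        obtain ⟨w1, hw1⟩ := iInf_lt_iff.1 hF'
        obtain ⟨w2, hw2⟩ := iInf_lt_iff.1 hG'
        have hchain := (hB w1 w2).trans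
          (calc ((ζ1 : EReal) * conjR R (ζ1⁻¹ • (KstarY j K w1 - μdag))
                + ((α / 2 * ‖w1‖ ^ 2 : ℝ) : EReal))
              + ((δ / α : ℝ) : EReal) *
                ((ζ2 : EReal) * conjR R (ζ2⁻¹ • (KstarY j K w2 - n.comp K))
                  + ((δ / 2 * ‖w2‖ ^ 2 : ℝ) : EReal))
              ≤ ((a + gap / 3 : ℝ) : EReal)
                + ((δ / α * (b + α / δ * (gap / 3)) : ℝ) : EReal) :=
                add_le_add hw1.le (ereal_mul_le_coe hd hw2.le)
            _ = ((a + gap / 3 + δ / α * (b + α / δ * (gap / 3)) : ℝ) : EReal) :=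
                (EReal.coe_add _ _).symm)
        rw [EReal.coe_le_coe_iff] at hchain
        have hsimp2 : δ / α * (b + α / δ * (gap / 3)) = δ / α * b + gap / 3 := by
          field_simp
        rw [hsimp2] at hchain
        have hgapval : gap = t - (a + δ / α * b) := hgapdef
        linarith
  by_cases hMtop : efun j K R α ζ1 μdag
      + ((δ / α : ℝ) : EReal) * efun j K R δ ζ2 (n.comp K) = ⊤
  · rw [hMtop, EReal.mul_top_of_pos (by exact_mod_cast inv_pos.2 hcoef)]
    exact le_top
  · have hMne : efun j K R α ζ1 μdag
        + ((δ / α : ℝ) : EReal) * efun j K R δ ζ2 (n.comp K) ≠ ⊥ := by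
      intro h
      rw [h] at hstepC
      exact (EReal.coe_ne_bot _) (le_bot_iff.1 hstepC)
    have hMm : efun j K R α ζ1 μdag
        + ((δ / α : ℝ) : EReal) * efun j K R δ ζ2 (n.comp K)
        = (((efun j K R α ζ1 μdag
          + ((δ / α : ℝ) : EReal) * efun j K R δ ζ2 (n.comp K)).toReal : ℝ) : EReal) :=
      (EReal.coe_toReal hMtop hMne).symm
    set m : ℝ := (efun j K R α ζ1 μdag
      + ((δ / α : ℝ) : EReal) * efun j K R δ ζ2 (n.comp K)).toReal with hmdef
    rw [hMm, ← EReal.coe_mul, EReal.coe_le_coe_iff]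
    rw [hMm, EReal.coe_le_coe_iff] at hstepC
    rw [htdef] at hstepC
    have hinv : coef⁻¹ * (coef * L) = L := by
      field_simp
    have hmul := mul_le_mul_of_nonneg_left hstepC (inv_nonneg.2 hcoef.le)
    rw [hinv] at hmul
    exact hmul
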